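/- Let ℓ₁,…,ℓ_n be pairwise relatively prime integers, all ℓ_i > 1, L := ℓ₁⋯ℓ_n, and ε₁,…,ε_n ∈ {1,−1}. Set B := diag(ε₁L/ℓ₁,…,ε_nL/ℓ_n). Then: (a) the I(B)-module 𝒞^pol(B) of polynomial vector fields commuting with B is free, generated by Q_j(x) = x_je_j, 1 ≤ j ≤ n; (b) if ε_n = −1 and all other ε_i = 1, then the algebra I(B) of polynomial first integrals admits the algebraically independent generator set φ₁(x) = x₁^{ℓ₁}x_n^{ℓ_n}, …, φ_{n−1}(x) = x_{n−1}^{ℓ_{n−1}}x_n^{ℓ_n}. -/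

import Mathlib

open Finset

/-- Polynomial vector fields on ℂⁿ. -/
abbrev PVF (n : ℕ) := Fin n → MvPolynomial (Fin n) ℂ

/-- Lie derivative `X_g(φ) = Dφ·g`. -/
noncomputable def lieDP {n : ℕ} (g : PVF n) (φ : MvPolynomial (Fin n) ℂ) :
    MvPolynomial (Fin n) ℂ :=
  ∑ j, g j * MvPolynomial.pderiv j φ

/-- Lie bracket `[g,h] = Dh·g − Dg·h`. -/
noncomputable def pbr {n : ℕ} (g h : PVF n) : PVF n :=
  fun i => lieDP g (h i) - lieDP h (g i)

/-- The linear vector field `x ↦ Bx`. -/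
noncomputable def linVFP {n : ℕ} (B : Matrix (Fin n) (Fin n) ℂ) : PVF n :=
  fun i => ∑ j, MvPolynomial.C (B i j) * MvPolynomial.X j

/-- The vector field `Q_j(x) = x_j e_j`. -/
noncomputable def Qvf {n : ℕ} (j : Fin n) : PVF n :=
  fun i => if i = j then MvPolynomial.X j else 0

open MvPolynomial Finsupp

noncomputable def wt {n : ℕ} (b : Fin n → ℂ) (α : Fin n →₀ ℕ) : ℂ := ∑ j, b j * (α j : ℂ)

lemma linVFP_diag {n : ℕ} (b : Fin n → ℂ) (i : Fin n) :
    linVFP (Matrix.diagonal b) i = MvPolynomial.C (b i) * MvPolynomial.X i := by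
  simp [linVFP, Matrix.diagonal, apply_ite, Finset.sum_ite_eq]

lemma X_mul_pderiv_monomial {n : ℕ} (j : Fin n) (α : Fin n →₀ ℕ) (c : ℂ) :
    MvPolynomial.X j * MvPolynomial.pderiv j (monomial α c) = monomial α (c * (α j : ℂ)) := by
  rw [pderiv_monomial]
  rcases Nat.eq_zero_or_pos (α j) with h | h
  · simp [h]
  · rw [X, monomial_mul, one_mul]
    rw [add_comm]
    have hle : Finsupp.single j 1 ≤ α := by rwa [Finsupp.single_le_iff]
    rw [tsub_add_cancel_of_le hle]

lemma W_monomial {n : ℕ} (b : Fin n → ℂ) (α : Fin n →₀ ℕ) (c : ℂ) :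
    lieDP (linVFP (Matrix.diagonal b)) (monomial α c) = monomial α (c * wt b α) := by
  unfold lieDP
  have h : ∀ j : Fin n, linVFP (Matrix.diagonal b) j * MvPolynomial.pderiv j (monomial α c)
      = monomial α (c * (b j * (α j : ℂ))) := by
    intro j
    rw [linVFP_diag, mul_assoc, X_mul_pderiv_monomial, C_mul_monomial]
    ring_nf
  rw [Finset.sum_congr rfl fun j _ => h j, ← map_sum, ← Finset.mul_sum]
  rfl

lemma lieDP_sum {n : ℕ} (g : PVF n) {ι : Type*} (s : Finset ι) (f : ι → MvPolynomial (Fin n) ℂ) :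
    lieDP g (∑ a ∈ s, f a) = ∑ a ∈ s, lieDP g (f a) := by
  unfold lieDP
  simp only [map_sum, Finset.mul_sum]
  exact Finset.sum_comm

lemma coeff_W {n : ℕ} (b : Fin n → ℂ) (φ : MvPolynomial (Fin n) ℂ) (β : Fin n →₀ ℕ) :
    coeff β (lieDP (linVFP (Matrix.diagonal b)) φ) = wt b β * coeff β φ := by
  conv_lhs => rw [φ.as_sum, lieDP_sum]
  simp only [W_monomial, MvPolynomial.coeff_sum, coeff_monomial]
  rw [Finset.sum_ite_eq' φ.support β fun α => coeff α φ * wt b α]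
  by_cases hb : β ∈ φ.support
  · simp [hb, mul_comm]
  · simp [hb, MvPolynomial.notMem_support_iff.1 hb]

section NT
variable {m : ℕ} (ℓ : Fin (m + 1) → ℕ) (hℓ : ∀ i, 1 < ℓ i)
  (hcop : ∀ i j : Fin (m + 1), i ≠ j → Nat.Coprime (ℓ i) (ℓ j))

include hℓ in
lemma N_eq (i : Fin (m+1)) : (∏ k, ℓ k) / ℓ i = ∏ k ∈ Finset.univ.erase i, ℓ k := by
  rw [← Finset.mul_prod_erase Finset.univ ℓ (Finset.mem_univ i)]
  exact Nat.mul_div_cancel_left _ (Nat.zero_lt_of_lt (hℓ i))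

include hℓ hcop in
lemma copN (i : Fin (m+1)) : Nat.Coprime (ℓ i) ((∏ k, ℓ k) / ℓ i) := by
  rw [N_eq ℓ hℓ]
  exact Nat.Coprime.prod_right fun j hj => hcop i j (Finset.ne_of_mem_erase hj).symm

include hℓ in
lemma dvdN {i j : Fin (m+1)} (hij : j ≠ i) : ℓ i ∣ (∏ k, ℓ k) / ℓ j := by
  rw [N_eq ℓ hℓ]
  exact Finset.dvd_prod_of_mem ℓ (Finset.mem_erase.2 ⟨hij.symm, Finset.mem_univ i⟩)

include hℓ hcop in
lemma keyA (ε : Fin (m + 1) → ℤ) (hε : ∀ i, ε i = 1 ∨ ε i = -1) (α : Fin (m+1) → ℕ)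
    (i : Fin (m+1))
    (h : ∑ j, ε j * (((∏ k, ℓ k) / ℓ j : ℕ) : ℤ) * (α j : ℤ)
        = ε i * (((∏ k, ℓ k) / ℓ i : ℕ) : ℤ))
    (h0 : α i = 0) : False := by
  have hdvd : (ℓ i : ℤ) ∣ ε i * (((∏ k, ℓ k) / ℓ i : ℕ) : ℤ) := by
    rw [← h]
    refine Finset.dvd_sum fun j _ => ?_
    by_cases hij : j = i
    · subst hij; simp [h0]
    · exact Dvd.dvd.mul_right (Dvd.dvd.mul_left
        (Int.natCast_dvd_natCast.2 (dvdN ℓ hℓ hij)) _) _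
  have hdvd2 : ℓ i ∣ (∏ k, ℓ k) / ℓ i := by
    rcases hε i with h1 | h1 <;> rw [h1] at hdvd
    · rw [one_mul] at hdvd; exact_mod_cast hdvd
    · rw [neg_one_mul, dvd_neg] at hdvd; exact_mod_cast hdvd
  have h2 := (copN ℓ hℓ hcop i).eq_one_of_dvd hdvd2
  have := hℓ i
  omega

include hℓ hcop in
lemma keyB (ε : Fin (m + 1) → ℤ) (hε : ∀ i, ε i = 1 ∨ ε i = -1) (α : Fin (m+1) → ℕ)
    (h : ∑ j, ε j * (((∏ k, ℓ k) / ℓ j : ℕ) : ℤ) * (α j : ℤ) = 0) (i : Fin (m+1)) :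
    ℓ i ∣ α i := by
  have hsplit := Finset.add_sum_erase Finset.univ
    (fun j => ε j * (((∏ k, ℓ k) / ℓ j : ℕ) : ℤ) * (α j : ℤ)) (Finset.mem_univ i)
  rw [h] at hsplit
  have hdvd : (ℓ i : ℤ) ∣ ε i * (((∏ k, ℓ k) / ℓ i : ℕ) : ℤ) * (α i : ℤ) := by
    have : ε i * (((∏ k, ℓ k) / ℓ i : ℕ) : ℤ) * (α i : ℤ)
        = -∑ j ∈ Finset.univ.erase i, ε j * (((∏ k, ℓ k) / ℓ j : ℕ) : ℤ) * (α j : ℤ) := by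
      linarith
    rw [this, dvd_neg]
    refine Finset.dvd_sum fun j hj => ?_
    exact Dvd.dvd.mul_right (Dvd.dvd.mul_left
      (Int.natCast_dvd_natCast.2 (dvdN ℓ hℓ (Finset.ne_of_mem_erase hj))) _) _
  have hdvd2 : ℓ i ∣ ((∏ k, ℓ k) / ℓ i) * α i := by
    rcases hε i with h1 | h1 <;> rw [h1] at hdvd
    · rw [one_mul] at hdvd; exact_mod_cast hdvd
    · rw [neg_one_mul, neg_mul, dvd_neg] at hdvd; exact_mod_cast hdvd
  exact (Nat.Coprime.dvd_of_dvd_mul_left (copN ℓ hℓ hcop i) hdvd2)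

end NT

lemma wt_single {n : ℕ} (b : Fin n → ℂ) (j : Fin n) (k : ℕ) :
    wt b (Finsupp.single j k) = b j * k := by
  rw [wt]
  rw [Finset.sum_eq_single j (fun c _ hc => by
    rw [Finsupp.single_apply, if_neg (Ne.symm hc)]; simp) (by simp)]
  simp

lemma wt_add {n : ℕ} (b : Fin n → ℂ) (α β : Fin n →₀ ℕ) :
    wt b (α + β) = wt b α + wt b β := by
  simp [wt, mul_add, Finset.sum_add_distrib]

lemma Wb_X {n : ℕ} (b : Fin n → ℂ) (j : Fin n) :
    lieDP (linVFP (Matrix.diagonal b)) (MvPolynomial.X j)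
      = MvPolynomial.C (b j) * MvPolynomial.X j := by
  rw [X, W_monomial, C_mul_monomial, wt_single]
  congr 1
  push_cast
  ring

lemma lieDP_Qvf {n : ℕ} (j : Fin n) (h : MvPolynomial (Fin n) ℂ) :
    lieDP (Qvf j) h = MvPolynomial.X j * MvPolynomial.pderiv j h := by
  unfold lieDP Qvf
  rw [Finset.sum_eq_single j (fun c _ hc => by simp [hc]) (by simp)]
  simp

lemma lieDP_CX {n : ℕ} (g : PVF n) (c : ℂ) (i : Fin n) :
    lieDP g (MvPolynomial.C c * MvPolynomial.X i) = g i * MvPolynomial.C c := by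
  unfold lieDP
  rw [Finset.sum_eq_single i (fun k _ hk => by
    simp [pderiv_C_mul, pderiv_X, Pi.single_apply, Ne.symm hk]) (by simp)]
  simp [pderiv_C_mul]

lemma wt_tsub_single {n : ℕ} (b : Fin n → ℂ) (α : Fin n →₀ ℕ) (i : Fin n) (h : 1 ≤ α i) :
    wt b (α - Finsupp.single i 1) = wt b α - b i := by
  rw [wt, wt]
  have step : ∀ j : Fin n, b j * (((α - Finsupp.single i 1 : Fin n →₀ ℕ) j : ℕ) : ℂ)
      = b j * (α j : ℂ) - (if j = i then b j else 0) := by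
    intro j
    rw [Finsupp.tsub_apply]
    by_cases hj : j = i
    · subst hj
      rw [Finsupp.single_eq_same, if_pos rfl, Nat.cast_sub h]
      ring
    · simp [Finsupp.single_apply, Ne.symm hj, hj]
  rw [Finset.sum_congr rfl fun j _ => step j, Finset.sum_sub_distrib,
    Finset.sum_ite_eq' Finset.univ i b]
  simp

lemma prod_monomial_one {n : ℕ} {ι : Type*} (s : Finset ι) (f : ι → (Fin n →₀ ℕ)) :
    ∏ i ∈ s, monomial (f i) (1 : ℂ) = monomial (∑ i ∈ s, f i) 1 := by
  classical
  induction s using Finset.induction with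
  | empty => simp [monomial_zero']
  | insert x t hx ih =>
    rw [Finset.prod_insert hx, Finset.sum_insert hx, ih, monomial_mul, one_mul]

lemma wt_cast {m : ℕ} (ℓ : Fin (m + 1) → ℕ) (ε : Fin (m + 1) → ℤ) (α : Fin (m + 1) →₀ ℕ) :
    wt (fun i => (ε i : ℂ) * (((∏ k, ℓ k) / ℓ i : ℕ) : ℂ)) α
      = ((∑ j, ε j * (((∏ k, ℓ k) / ℓ j : ℕ) : ℤ) * (α j : ℤ) : ℤ) : ℂ) := by
  rw [wt, Int.cast_sum]
  exact Finset.sum_congr rfl fun j _ => by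
    simp only [Int.cast_mul, Int.cast_natCast]

/-- Let `ℓ₁,…,ℓ_n` be pairwise relatively prime integers
`> 1`, `L = ℓ₁⋯ℓ_n`, `ε_i ∈ {1,−1}` and `B = diag(ε₁L/ℓ₁,…,ε_nL/ℓ_n)`. Then
(a) `𝒞^pol(B)` is a free `I(B)`-module generated by the `Q_j`, and
(b) if `ε_n = −1` and all other `ε_i = 1`, then `I(B)` admits the algebraically
independent generator set `φ_i = x_i^{ℓ_i} x_n^{ℓ_n}`, `1 ≤ i ≤ n−1`. -/
theorem stmt_16 {m : ℕ} (ℓ : Fin (m + 1) → ℕ)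
    (hℓ : ∀ i, 1 < ℓ i)
    (hcop : ∀ i j : Fin (m + 1), i ≠ j → Nat.Coprime (ℓ i) (ℓ j))
    (ε : Fin (m + 1) → ℤ) (hε : ∀ i, ε i = 1 ∨ ε i = -1) :
    -- (a) :
    ((∀ j, pbr (linVFP (Matrix.diagonal
        fun i => (ε i : ℂ) * (((∏ k, ℓ k) / ℓ i : ℕ) : ℂ))) (Qvf j) = 0) ∧
      (∀ g : PVF (m + 1),
        pbr (linVFP (Matrix.diagonal
          fun i => (ε i : ℂ) * (((∏ k, ℓ k) / ℓ i : ℕ) : ℂ))) g = 0 →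
        ∃ φ : Fin (m + 1) → MvPolynomial (Fin (m + 1)) ℂ,
          (∀ j, lieDP (linVFP (Matrix.diagonal
            fun i => (ε i : ℂ) * (((∏ k, ℓ k) / ℓ i : ℕ) : ℂ))) (φ j) = 0) ∧
          ∀ i, g i = φ i * MvPolynomial.X i) ∧
      (∀ φ : Fin (m + 1) → MvPolynomial (Fin (m + 1)) ℂ,
        (∀ j, lieDP (linVFP (Matrix.diagonal
          fun i => (ε i : ℂ) * (((∏ k, ℓ k) / ℓ i : ℕ) : ℂ))) (φ j) = 0) →
        (∀ i, φ i * MvPolynomial.X i = 0) → ∀ i, φ i = 0)) ∧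
    -- (b) :
    ((ε (Fin.last m) = -1 ∧ ∀ i : Fin m, ε i.castSucc = 1) →
      (AlgebraicIndependent ℂ (fun i : Fin m =>
        MvPolynomial.X (R := ℂ) i.castSucc ^ ℓ i.castSucc *
        MvPolynomial.X (Fin.last m) ^ ℓ (Fin.last m)) ∧
      (∀ i : Fin m, lieDP (linVFP (Matrix.diagonal
          fun i => (ε i : ℂ) * (((∏ k, ℓ k) / ℓ i : ℕ) : ℂ)))
        (MvPolynomial.X (R := ℂ) i.castSucc ^ ℓ i.castSucc *
          MvPolynomial.X (Fin.last m) ^ ℓ (Fin.last m)) = 0) ∧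
      (∀ ψ : MvPolynomial (Fin (m + 1)) ℂ,
        lieDP (linVFP (Matrix.diagonal
          fun i => (ε i : ℂ) * (((∏ k, ℓ k) / ℓ i : ℕ) : ℂ))) ψ = 0 →
        ψ ∈ Algebra.adjoin ℂ (Set.range (fun i : Fin m =>
          MvPolynomial.X (R := ℂ) i.castSucc ^ ℓ i.castSucc *
          MvPolynomial.X (Fin.last m) ^ ℓ (Fin.last m)))))) := by
  set b : Fin (m + 1) → ℂ := fun i => (ε i : ℂ) * (((∏ k, ℓ k) / ℓ i : ℕ) : ℂ) with hb
  have hbi : ∀ i, b i = ((ε i * (((∏ k, ℓ k) / ℓ i : ℕ) : ℤ) : ℤ) : ℂ) := by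
    intro i
    rw [hb]
    simp only [Int.cast_mul, Int.cast_natCast]
  refine ⟨⟨?_, ?_, ?_⟩, ?_⟩
  · -- (a1)
    intro j
    funext i
    show lieDP (linVFP (Matrix.diagonal b)) (Qvf j i)
      - lieDP (Qvf j) (linVFP (Matrix.diagonal b) i) = 0
    rw [linVFP_diag, lieDP_Qvf]
    unfold Qvf
    by_cases hij : i = j
    · subst hij
      rw [if_pos rfl, Wb_X, pderiv_C_mul, pderiv_X_self, mul_one]
      ring
    · rw [if_neg hij, pderiv_C_mul, pderiv_X]
      simp [lieDP, Pi.single_apply, hij]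
  · -- (a2)
    intro g hg
    have hcomp : ∀ i, lieDP (linVFP (Matrix.diagonal b)) (g i) = MvPolynomial.C (b i) * g i := by
      intro i
      have h1 : lieDP (linVFP (Matrix.diagonal b)) (g i)
          - lieDP g (linVFP (Matrix.diagonal b) i) = 0 := congrFun hg i
      rw [linVFP_diag, lieDP_CX, sub_eq_zero] at h1
      rw [h1]; ring
    have hco : ∀ i α, α ∈ (g i).support → wt b α = b i := by
      intro i α hα
      have h2 := congrArg (MvPolynomial.coeff α) (hcomp i)
      rw [coeff_W, coeff_C_mul] at h2
      exact mul_right_cancel₀ (MvPolynomial.mem_support_iff.1 hα) h2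
    have hge1 : ∀ i α, α ∈ (g i).support → 1 ≤ α i := by
      intro i α hα
      by_contra hlt
      have h0 : α i = 0 := by omega
      have hwt := hco i α hα
      rw [hbi i, hb, wt_cast] at hwt
      exact keyA ℓ hℓ hcop ε hε (fun j => α j) i (Int.cast_injective hwt) h0
    refine ⟨fun i => ∑ α ∈ (g i).support,
      monomial (α - Finsupp.single i 1) (MvPolynomial.coeff α (g i)), ?_, ?_⟩
    · intro j
      rw [lieDP_sum]
      refine Finset.sum_eq_zero fun α hα => ?_
      rw [W_monomial, wt_tsub_single b α j (hge1 j α hα), hco j α hα, sub_self, mul_zero,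
        monomial_zero]
    · intro i
      conv_lhs => rw [(g i).as_sum]
      rw [Finset.sum_mul]
      refine Finset.sum_congr rfl fun α hα => ?_
      rw [X, monomial_mul, mul_one,
        tsub_add_cancel_of_le (Finsupp.single_le_iff.2 (hge1 i α hα))]
  · -- (a3)
    intro φ hφ h0 i
    rcases mul_eq_zero.1 (h0 i) with h | h
    · exact h
    · exact absurd h (MvPolynomial.X_ne_zero i)
  · -- (b)
    rintro ⟨hlast, hcast⟩
    have hLN : ∀ j, ℓ j * ((∏ k, ℓ k) / ℓ j) = ∏ k, ℓ k :=
      fun j => Nat.mul_div_cancel' (Finset.dvd_prod_of_mem ℓ (Finset.mem_univ j))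
    set v : Fin m → (Fin (m + 1) →₀ ℕ) := fun i =>
      Finsupp.single i.castSucc (ℓ i.castSucc)
        + Finsupp.single (Fin.last m) (ℓ (Fin.last m)) with hv
    have hΦ : ∀ i : Fin m, MvPolynomial.X (R := ℂ) i.castSucc ^ ℓ i.castSucc *
        MvPolynomial.X (Fin.last m) ^ ℓ (Fin.last m) = monomial (v i) 1 := by
      intro i
      rw [X_pow_eq_monomial, X_pow_eq_monomial, monomial_mul, one_mul]
    have hwtv : ∀ i : Fin m, wt b (v i) = 0 := by
      intro i
      rw [hv]
      simp only
      rw [wt_add, wt_single, wt_single]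
      simp only [hb]
      rw [hcast i, hlast]
      have e1 : ((((∏ k, ℓ k) / ℓ i.castSucc : ℕ)) : ℂ) * ((ℓ i.castSucc : ℕ) : ℂ)
          = ((∏ k, ℓ k : ℕ) : ℂ) := by
        rw [← Nat.cast_mul, mul_comm ((∏ k, ℓ k) / ℓ i.castSucc), hLN]
      have e2 : ((((∏ k, ℓ k) / ℓ (Fin.last m) : ℕ)) : ℂ) * ((ℓ (Fin.last m) : ℕ) : ℂ)
          = ((∏ k, ℓ k : ℕ) : ℂ) := by
        rw [← Nat.cast_mul, mul_comm ((∏ k, ℓ k) / ℓ (Fin.last m)), hLN]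
      rw [mul_assoc, mul_assoc, e1, e2]
      norm_num
    have hTapply : ∀ (c : Fin m → ℕ) (j : Fin m),
        (∑ i, c i • v i : Fin (m + 1) →₀ ℕ) (Fin.castSucc j) = c j * ℓ j.castSucc := by
      intro c j
      rw [Finsupp.finset_sum_apply]
      rw [Finset.sum_eq_single j (fun i _ hij => by
        rw [Finsupp.smul_apply, hv]
        simp [Finsupp.single_apply, Fin.castSucc_inj, hij, (Fin.castSucc_lt_last j).ne']) (by simp)]
      rw [Finsupp.smul_apply, hv]
      simp [Finsupp.single_apply, (Fin.castSucc_lt_last j).ne', smul_eq_mul]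
    have hTlast : ∀ (c : Fin m → ℕ),
        (∑ i, c i • v i : Fin (m + 1) →₀ ℕ) (Fin.last m) = (∑ i, c i) * ℓ (Fin.last m) := by
      intro c
      rw [Finsupp.finset_sum_apply, Finset.sum_mul]
      refine Finset.sum_congr rfl fun i _ => ?_
      rw [Finsupp.smul_apply, hv]
      simp [Finsupp.single_apply, (Fin.castSucc_lt_last i).ne, smul_eq_mul]
    have haev : ∀ (s : Fin m →₀ ℕ) (c : ℂ),
        MvPolynomial.aeval (fun i : Fin m =>
          MvPolynomial.X (R := ℂ) i.castSucc ^ ℓ i.castSucc *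
          MvPolynomial.X (Fin.last m) ^ ℓ (Fin.last m)) (monomial s c)
          = monomial (∑ i, s i • v i) c := by
      intro s c
      rw [aeval_monomial]
      rw [Finsupp.prod_fintype _ _ (fun i => pow_zero _)]
      have hprod : ∏ i, (MvPolynomial.X (R := ℂ) i.castSucc ^ ℓ i.castSucc *
            MvPolynomial.X (Fin.last m) ^ ℓ (Fin.last m)) ^ s i
            = ∏ i, monomial (s i • v i) (1 : ℂ) :=
        Finset.prod_congr rfl fun i _ => by rw [hΦ i, monomial_pow, one_pow]
      rw [hprod, prod_monomial_one, MvPolynomial.algebraMap_eq, C_mul_monomial, mul_one]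
    refine ⟨?_, ?_, ?_⟩
    · -- algebraic independence
      rw [algebraicIndependent_iff]
      intro p hp
      by_contra hp0
      obtain ⟨α, hα⟩ := MvPolynomial.support_nonempty.2 hp0
      have hc : MvPolynomial.coeff (∑ i, α i • v i)
          (MvPolynomial.aeval (fun i : Fin m =>
            MvPolynomial.X (R := ℂ) i.castSucc ^ ℓ i.castSucc *
            MvPolynomial.X (Fin.last m) ^ ℓ (Fin.last m)) p) = MvPolynomial.coeff α p := by
        conv_lhs => rw [p.as_sum, map_sum]
        simp only [haev]
        rw [MvPolynomial.coeff_sum]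
        simp only [coeff_monomial]
        rw [Finset.sum_eq_single_of_mem α hα (fun β _ hβ => if_neg ?_), if_pos rfl]
        intro hTeq
        apply hβ
        ext j
        have e : β j * ℓ j.castSucc = α j * ℓ j.castSucc := by
          rw [← hTapply β j, ← hTapply α j, hTeq]
        exact Nat.eq_of_mul_eq_mul_right (Nat.zero_lt_of_lt (hℓ j.castSucc)) e
      rw [hp, MvPolynomial.coeff_zero] at hc
      exact MvPolynomial.mem_support_iff.1 hα hc.symm
    · -- first integrals
      intro i
      rw [hΦ i, W_monomial, hwtv i, mul_zero, monomial_zero]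
    · -- generation
      intro ψ hψ
      have hsupp : ∀ α ∈ ψ.support, wt b α = 0 := by
        intro α hα
        have h2 := congrArg (MvPolynomial.coeff α) hψ
        rw [coeff_W, MvPolynomial.coeff_zero] at h2
        exact (mul_eq_zero.1 h2).resolve_right (MvPolynomial.mem_support_iff.1 hα)
      rw [ψ.as_sum]
      refine Subalgebra.sum_mem _ fun α hα => ?_
      have hwt := hsupp α hα
      rw [hb, wt_cast] at hwt
      have hint : (∑ j, ε j * (((∏ k, ℓ k) / ℓ j : ℕ) : ℤ) * (α j : ℤ)) = 0 := by
        exact_mod_cast hwt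
      have hdvd := keyB ℓ hℓ hcop ε hε (fun j => α j) hint
      set c : Fin m → ℕ := fun i => α i.castSucc / ℓ i.castSucc with hcdef
      set cl : ℕ := α (Fin.last m) / ℓ (Fin.last m) with hcldef
      have hcs : ∀ i : Fin m, α i.castSucc = c i * ℓ i.castSucc :=
        fun i => (Nat.div_mul_cancel (hdvd i.castSucc)).symm
      have hclast : α (Fin.last m) = cl * ℓ (Fin.last m) :=
        (Nat.div_mul_cancel (hdvd (Fin.last m))).symm
      have hLz : ∀ j, (ℓ j : ℤ) * (((∏ k, ℓ k) / ℓ j : ℕ) : ℤ) = ((∏ k, ℓ k : ℕ) : ℤ) :=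
        fun j => by exact_mod_cast congrArg (Nat.cast (R := ℤ)) (hLN j)
      have h3 : ∀ i : Fin m, ε i.castSucc * (((∏ k, ℓ k) / ℓ i.castSucc : ℕ) : ℤ)
          * ((α i.castSucc : ℕ) : ℤ) = ((∏ k, ℓ k : ℕ) : ℤ) * (c i : ℤ) := by
        intro i
        rw [hcast i, hcs i, ← hLz i.castSucc]
        push_cast
        ring
      have h4 : ε (Fin.last m) * (((∏ k, ℓ k) / ℓ (Fin.last m) : ℕ) : ℤ)
          * ((α (Fin.last m) : ℕ) : ℤ) = -(((∏ k, ℓ k : ℕ) : ℤ) * (cl : ℤ)) := by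
        rw [hlast, hclast, ← hLz (Fin.last m)]
        push_cast
        ring
      have h2 := hint
      rw [Fin.sum_univ_castSucc] at h2
      rw [Finset.sum_congr rfl (fun i _ => h3 i), h4] at h2
      have h5 : ((∏ k, ℓ k : ℕ) : ℤ) * (∑ i, (c i : ℤ)) = ((∏ k, ℓ k : ℕ) : ℤ) * (cl : ℤ) := by
        rw [Finset.mul_sum]
        linarith [h2]
      have hL0 : ((∏ k, ℓ k : ℕ) : ℤ) ≠ 0 := by
        have : 0 < ∏ k, ℓ k := Finset.prod_pos fun k _ => Nat.zero_lt_of_lt (hℓ k)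
        exact_mod_cast this.ne'
      have h6 : (∑ i, c i : ℕ) = cl := by
        have := mul_left_cancel₀ hL0 h5
        exact_mod_cast this
      have hαeq : α = ∑ i, c i • v i := by
        ext x
        refine Fin.lastCases ?_ ?_ x
        · rw [hTlast c, h6]
          exact hclast
        · intro j
          rw [hTapply c j]
          exact hcs j
      have hmono : (monomial α (MvPolynomial.coeff α ψ) : MvPolynomial (Fin (m + 1)) ℂ)
          = MvPolynomial.C (MvPolynomial.coeff α ψ)
            * ∏ i, (MvPolynomial.X (R := ℂ) i.castSucc ^ ℓ i.castSucc *
                MvPolynomial.X (Fin.last m) ^ ℓ (Fin.last m)) ^ c i := by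
        have hprod : ∏ i, (MvPolynomial.X (R := ℂ) i.castSucc ^ ℓ i.castSucc *
              MvPolynomial.X (Fin.last m) ^ ℓ (Fin.last m)) ^ c i
              = ∏ i, monomial (c i • v i) (1 : ℂ) :=
          Finset.prod_congr rfl fun i _ => by rw [hΦ i, monomial_pow, one_pow]
        rw [hprod, prod_monomial_one, C_mul_monomial, mul_one, ← hαeq]
      rw [hmono]
      refine Subalgebra.mul_mem _ ?_ ?_
      · rw [← MvPolynomial.algebraMap_eq]
        exact Subalgebra.algebraMap_mem _ _
      · exact Subalgebra.prod_mem _ fun i _ =>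
          pow_mem (Algebra.subset_adjoin (Set.mem_range_self i)) _
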